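/- Let V be a module and for each index i in a finite set I let η_i, ξ_i be endomorphisms with η_i² = 0, ξ_i² = 0, η_i ξ_i + ξ_i η_i = id, and suppose the projections e_i = η_i ξ_i pairwise commute. Then the composite P = ∏_{i∈I} e_i is idempotent and its image equals the intersection ⋂_{i∈I} Ker(η_i). -/

import Mathlib

open Module

theorem product_projection_image {R M I : Type*} [CommRing R] [AddCommGroup M] [Module R M]
    [Fintype I] (η ξ : I → Module.End R M)
    (hη : ∀ i, η i * η i = 0) (hξ : ∀ i, ξ i * ξ i = 0)
    (hanti : ∀ i, η i * ξ i + ξ i * η i = 1)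
    (hcomm : ∀ i j, Commute (η i * ξ i) (η j * ξ j))
    (P : Module.End R M)
    (hP : P = Finset.univ.noncommProd (fun i => η i * ξ i)
      (fun a _ b _ _ => hcomm a b)) :
    P * P = P ∧ LinearMap.range P = ⨅ i, LinearMap.ker (η i) := by
  classical
  -- e_i is idempotent
  have hξη : ∀ i, ξ i * η i = 1 - η i * ξ i := by
    intro i; exact eq_sub_of_add_eq' (hanti i)
  have he : ∀ i, (η i * ξ i) * (η i * ξ i) = η i * ξ i := by
    intro i
    have h1 : η i * (ξ i * η i) * ξ i = η i * ξ i := by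
      rw [hξη i]
      have : η i * (η i * ξ i) = 0 := by
        rw [← mul_assoc, hη i, zero_mul]
      rw [mul_sub, mul_one, this, sub_zero]
    have h2 : (η i * ξ i) * (η i * ξ i) = η i * (ξ i * η i) * ξ i := by
      simp only [mul_assoc]
    rw [h2, h1]
  -- η i kills e_i on the left
  have hηe : ∀ i, η i * (η i * ξ i) = 0 := by
    intro i; rw [← mul_assoc, hη i, zero_mul]
  -- decompose P = e_i * rest
  have hPdec : ∀ i : I, ∃ Q : Module.End R M, P = (η i * ξ i) * Q ∧
      (η i * ξ i) * Q = Q * (η i * ξ i) := by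
    intro i
    refine ⟨(Finset.univ.erase i).noncommProd (fun j => η j * ξ j)
      (fun a _ b _ _ => hcomm a b), ?_, ?_⟩
    · rw [hP, ← Finset.mul_noncommProd_erase Finset.univ (Finset.mem_univ i)
        (fun j => η j * ξ j) (fun a _ b _ _ => hcomm a b)]
    · exact (Finset.noncommProd_commute _ _ _ _
        (fun x _ => hcomm i x)).eq
  -- e_i * P = P
  have heP : ∀ i, (η i * ξ i) * P = P := by
    intro i
    obtain ⟨Q, hQ, _⟩ := hPdec i
    rw [hQ, ← mul_assoc, he i]
  -- η_i * P = 0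
  have hηP : ∀ i, η i * P = 0 := by
    intro i
    obtain ⟨Q, hQ, _⟩ := hPdec i
    rw [hQ, ← mul_assoc, hηe i, zero_mul]
  -- P is idempotent
  have hPP : P * P = P := by
    have key : ∀ s : Finset I,
        (s.noncommProd (fun j => η j * ξ j) (fun a _ b _ _ => hcomm a b)) * P = P := by
      intro s
      induction s using Finset.induction_on with
      | empty => exact one_mul P
      | @insert a s ha ih =>
        rw [Finset.noncommProd_insert_of_notMem _ _ _ (fun a _ b _ _ => hcomm a b) ha, mul_assoc, ih, heP]
    rw [hP] at *
    exact key Finset.univ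
  refine ⟨hPP, le_antisymm ?_ ?_⟩
  · rintro x ⟨y, rfl⟩
    simp only [Submodule.mem_iInf, LinearMap.mem_ker]
    intro i
    have := congrArg (fun f : Module.End R M => f y) (hηP i)
    simpa using this
  · intro x hx
    simp only [Submodule.mem_iInf, LinearMap.mem_ker] at hx
    -- each e_i fixes x
    have hex : ∀ i, (η i * ξ i) x = x := by
      intro i
      have := congrArg (fun f : Module.End R M => f x) (hanti i)
      simp only [LinearMap.add_apply, Module.End.mul_apply, Module.End.one_apply] at this
      rw [hx i, map_zero, add_zero] at this
      simpa using this
    have key : ∀ s : Finset I,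
        (s.noncommProd (fun j => η j * ξ j) (fun a _ b _ _ => hcomm a b)) x = x := by
      intro s
      induction s using Finset.induction_on with
      | empty => rfl
      | @insert a s ha ih =>
        rw [Finset.noncommProd_insert_of_notMem _ _ _ (fun a _ b _ _ => hcomm a b) ha]
        simp only [Module.End.mul_apply]
        rw [ih]
        simpa only [Module.End.mul_apply] using hex a
    exact ⟨x, by rw [hP]; exact key Finset.univ⟩
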